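/- arXiv:1309.5658 — 2 statements merged into one kernel-verified Lean document; each statement's English description precedes it below -/
import Mathlib

section
/- There exist constants C₁, C₂ > 0 such that for every λ ≥ 0, every nonnegative f ∈ L¹([0,1], r dr), and every smooth function u : [0,1] → ℝ satisfying u'(0) = 0, u(1) = 0, u'(1) = 0, the functional J_λ admits the radial lower bound J_λ(u) ≥ (1/2)X² − C₁X³ − C₂ λ ‖f‖_{L¹(r dr)} X, where X = ( ∫₀¹ (u''(r))² r dr )^{1/2} and ‖f‖_{L¹(r dr)} = ∫₀¹ f(r) r dr. -/
open MeasureTheory Set intervalIntegral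

lemma my_cs {a b : ℝ} (hab : a ≤ b) {g h : ℝ → ℝ}
    (hg : ContinuousOn g (Icc a b)) (hh : ContinuousOn h (Icc a b)) :
    (∫ x in a..b, g x * h x) ^ 2
      ≤ (∫ x in a..b, g x ^ 2) * (∫ x in a..b, h x ^ 2) := by
  have hI : uIcc a b = Icc a b := uIcc_of_le hab
  have hg' : ContinuousOn g (uIcc a b) := hI ▸ hg
  have hh' : ContinuousOn h (uIcc a b) := hI ▸ hh
  have hg2 : IntervalIntegrable (fun x => g x ^ 2) volume a b :=
    (hg'.pow 2).intervalIntegrable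
  have hh2 : IntervalIntegrable (fun x => h x ^ 2) volume a b :=
    (hh'.pow 2).intervalIntegrable
  have hgh : IntervalIntegrable (fun x => g x * h x) volume a b :=
    (hg'.mul hh').intervalIntegrable
  have key : ∀ t : ℝ, 0 ≤ (∫ x in a..b, g x ^ 2) * (t * t)
      + (2 * ∫ x in a..b, g x * h x) * t + (∫ x in a..b, h x ^ 2) := by
    intro t
    have h1 : (0:ℝ) ≤ ∫ x in a..b, (t * g x + h x) ^ 2 :=
      integral_nonneg hab (fun x _ => sq_nonneg _)
    have h2 : (∫ x in a..b, (t * g x + h x) ^ 2)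
        = (∫ x in a..b, g x ^ 2) * (t * t)
          + (2 * ∫ x in a..b, g x * h x) * t + (∫ x in a..b, h x ^ 2) := by
      have e : ∀ x : ℝ, (t * g x + h x) ^ 2
          = (t * t) * g x ^ 2 + (2 * t) * (g x * h x) + h x ^ 2 := by
        intro x; ring
      simp_rw [e]
      rw [integral_add ((hg2.const_mul _).add (hgh.const_mul _)) hh2,
        integral_add (hg2.const_mul _) (hgh.const_mul _),
        intervalIntegral.integral_const_mul, intervalIntegral.integral_const_mul]
      ring
    linarith [h2 ▸ h1]
  have hd := discrim_le_zero key
  rw [discrim] at hd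
  nlinarith [hd]

lemma vbound {v w : ℝ → ℝ} (hw : Continuous w) (hv1 : v 1 = 0)
    (ftc : ∀ a b : ℝ, (∫ x in a..b, w x) = v b - v a)
    {r : ℝ} (hr : r ∈ Ioc (0:ℝ) 1) :
    |v r| ≤ Real.sqrt 2 * Real.sqrt (∫ s in (0:ℝ)..1, w s ^ 2 * s) * r ^ (-(1/4) : ℝ) := by
  obtain ⟨hr0, hr1⟩ := hr
  set I2 : ℝ := ∫ s in (0:ℝ)..1, w s ^ 2 * s with hI2def
  have hI2nn : 0 ≤ I2 := integral_nonneg (by norm_num)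
    (fun x hx => mul_nonneg (sq_nonneg _) hx.1)
  -- v r = -∫_r^1 w
  have h1 : |v r| ≤ ∫ s in r..1, |w s| := by
    have : v r = -(∫ s in r..1, w s) := by rw [ftc r 1, hv1]; ring
    rw [this, abs_neg]
    exact abs_integral_le_integral_abs hr1
  -- Cauchy-Schwarz
  have hcs : (∫ s in r..1, |w s|) ^ 2
      ≤ (∫ s in r..1, (s ^ (-(1/2) : ℝ)) ^ 2) * (∫ s in r..1, (|w s| * s ^ ((1/2) : ℝ)) ^ 2) := by
    have heq : (∫ s in r..1, |w s|)
        = ∫ s in r..1, (s ^ (-(1/2) : ℝ)) * (|w s| * s ^ ((1/2) : ℝ)) := by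
      refine integral_congr (fun s hs => ?_)
      rw [uIcc_of_le hr1] at hs
      have hs0 : 0 < s := lt_of_lt_of_le hr0 hs.1
      rw [mul_comm (s ^ (-(1/2):ℝ)), mul_assoc, ← Real.rpow_add hs0]
      norm_num
    rw [heq]
    refine my_cs hr1 ?_ ?_
    · exact continuousOn_id.rpow_const
        (fun s hs => Or.inl (ne_of_gt (lt_of_lt_of_le hr0 hs.1)))
    · exact (hw.abs.continuousOn).mul (continuousOn_id.rpow_const
        (fun s hs => Or.inl (ne_of_gt (lt_of_lt_of_le hr0 hs.1))))
  -- compute the two factors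
  have hf1 : (∫ s in r..1, (s ^ (-(1/2) : ℝ)) ^ 2) = - Real.log r := by
    have e : ∀ s ∈ uIcc r 1, (s ^ (-(1/2) : ℝ)) ^ 2 = s⁻¹ := by
      intro s hs
      rw [uIcc_of_le hr1] at hs
      have hs0 : 0 < s := lt_of_lt_of_le hr0 hs.1
      rw [← Real.rpow_natCast (s ^ (-(1/2):ℝ)) 2, ← Real.rpow_mul hs0.le]
      norm_num
      exact (Real.rpow_neg_one s)
    rw [integral_congr e, integral_inv (by rw [uIcc_of_le hr1]; exact fun h => absurd h.1 (not_le.mpr hr0))]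
    rw [Real.log_div one_ne_zero (ne_of_gt hr0), Real.log_one]
    ring
  have hf2 : (∫ s in r..1, (|w s| * s ^ ((1/2) : ℝ)) ^ 2) ≤ I2 := by
    have e : ∀ s ∈ uIcc r 1, (|w s| * s ^ ((1/2) : ℝ)) ^ 2 = w s ^ 2 * s := by
      intro s hs
      rw [uIcc_of_le hr1] at hs
      have hs0 : 0 ≤ s := le_trans hr0.le hs.1
      rw [mul_pow, sq_abs, ← Real.rpow_natCast (s ^ ((1/2):ℝ)) 2, ← Real.rpow_mul hs0]
      norm_num
    rw [integral_congr e]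
    have hsplit : (∫ s in (0:ℝ)..r, w s ^ 2 * s) + (∫ s in r..1, w s ^ 2 * s) = I2 :=
      integral_add_adjacent_intervals
        (((hw.pow 2).mul continuous_id).intervalIntegrable _ _)
        (((hw.pow 2).mul continuous_id).intervalIntegrable _ _)
    have hnn : 0 ≤ ∫ s in (0:ℝ)..r, w s ^ 2 * s :=
      integral_nonneg hr0.le (fun x hx => mul_nonneg (sq_nonneg _) hx.1)
    linarith
  -- log bound
  have hlog : - Real.log r ≤ 2 * r ^ (-(1/2) : ℝ) := by
    have h2 : Real.log (r ^ (-(1/2):ℝ)) ≤ r ^ (-(1/2):ℝ) - 1 :=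
      Real.log_le_sub_one_of_pos (Real.rpow_pos_of_pos hr0 _)
    rw [Real.log_rpow hr0] at h2
    have : (0:ℝ) < r ^ (-(1/2):ℝ) := Real.rpow_pos_of_pos hr0 _
    nlinarith
  -- combine
  have hsq : |v r| ^ 2 ≤ (Real.sqrt 2 * Real.sqrt I2 * r ^ (-(1/4) : ℝ)) ^ 2 := by
    have hb : |v r| ^ 2 ≤ (- Real.log r) * I2 := by
      calc |v r| ^ 2 ≤ (∫ s in r..1, |w s|) ^ 2 := by
            apply pow_le_pow_left₀ (abs_nonneg _) h1
        _ ≤ (∫ s in r..1, (s ^ (-(1/2) : ℝ)) ^ 2) * (∫ s in r..1, (|w s| * s ^ ((1/2) : ℝ)) ^ 2) := hcs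
        _ ≤ (- Real.log r) * I2 := by
            rw [hf1]
            apply mul_le_mul_of_nonneg_left hf2
            have := Real.log_nonpos hr0.le hr1
            linarith
    have hrhs : (Real.sqrt 2 * Real.sqrt I2 * r ^ (-(1/4) : ℝ)) ^ 2
        = 2 * r ^ (-(1/2):ℝ) * I2 := by
      rw [mul_pow, mul_pow, Real.sq_sqrt (by norm_num : (0:ℝ) ≤ 2), Real.sq_sqrt hI2nn,
        ← Real.rpow_natCast (r ^ (-(1/4):ℝ)) 2, ← Real.rpow_mul hr0.le]
      norm_num
      ring
    rw [hrhs]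
    calc |v r| ^ 2 ≤ (- Real.log r) * I2 := hb
      _ ≤ 2 * r ^ (-(1/2):ℝ) * I2 := mul_le_mul_of_nonneg_right hlog hI2nn
  have hrhsnn : 0 ≤ Real.sqrt 2 * Real.sqrt I2 * r ^ (-(1/4) : ℝ) :=
    mul_nonneg (mul_nonneg (Real.sqrt_nonneg _) (Real.sqrt_nonneg _)) (Real.rpow_nonneg hr0.le _)
  nlinarith [abs_nonneg (v r), hsq]

open MeasureTheory Set

/-- The energy functional `J_λ` of the radial Dirichlet problem. -/
noncomputable def Jfun (lam : ℝ) (f u : ℝ → ℝ) : ℝ :=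
  (1 / 2) * (∫ r in (0:ℝ)..1, ((deriv (deriv u) r) ^ 2 + (deriv u r) ^ 2 / r ^ 2) * r)
    + (1 / 6) * (∫ r in (0:ℝ)..1, (deriv u r) ^ 3)
    - lam * ∫ r in (0:ℝ)..1, f r * u r * r

set_option maxHeartbeats 1000000 in
/-- Radial lower bound for the functional `J_λ` in terms of `X = ‖u''‖_{L²(r dr)}`. -/
theorem stmt5 :
    ∃ C₁ > (0:ℝ), ∃ C₂ > (0:ℝ), ∀ lam : ℝ, 0 ≤ lam → ∀ f : ℝ → ℝ,
      (∀ r ∈ Icc (0:ℝ) 1, 0 ≤ f r) →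
      IntegrableOn (fun r => f r * r) (Ioc 0 1) volume →
      ∀ u : ℝ → ℝ, ContDiff ℝ (⊤ : ℕ∞) u →
        deriv u 0 = 0 → u 1 = 0 → deriv u 1 = 0 →
        ∀ X : ℝ, X = Real.sqrt (∫ r in (0:ℝ)..1, (deriv (deriv u) r) ^ 2 * r) →
          (1 / 2) * X ^ 2 - C₁ * X ^ 3 - C₂ * lam * (∫ r in (0:ℝ)..1, f r * r) * X
            ≤ Jfun lam f u := by
  refine ⟨2, by norm_num, 2, by norm_num, ?_⟩
  intro lam hlam f hf hfint u hu hu'0 hu1 hu'1 X hX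
  set v := deriv u with hvdef
  set w := deriv (deriv u) with hwdef
  have huD : Differentiable ℝ u := (contDiff_infty_iff_deriv.mp hu).1
  have hvC := (contDiff_infty_iff_deriv.mp hu).2
  have hvD : Differentiable ℝ v := (contDiff_infty_iff_deriv.mp hvC).1
  have hwc : Continuous w := (contDiff_infty_iff_deriv.mp hvC).2.continuous
  have hvc : Continuous v := hvC.continuous
  have huc : Continuous u := hu.continuous
  have ftc_w : ∀ a b : ℝ, (∫ x in a..b, w x) = v b - v a := fun a b =>
    integral_deriv_eq_sub (fun x _ => hvD x) (hwc.intervalIntegrable a b)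
  have ftc_v : ∀ a b : ℝ, (∫ x in a..b, v x) = u b - u a := fun a b =>
    integral_deriv_eq_sub (fun x _ => huD x) (hvc.intervalIntegrable a b)
  set I2 : ℝ := ∫ s in (0:ℝ)..1, w s ^ 2 * s with hI2def
  have hI2nn : 0 ≤ I2 := integral_nonneg (by norm_num)
    (fun x hx => mul_nonneg (sq_nonneg _) hx.1)
  have hXnn : 0 ≤ X := hX ▸ Real.sqrt_nonneg _
  have hX2 : X ^ 2 = I2 := by rw [hX, Real.sq_sqrt hI2nn]
  have hXI : Real.sqrt I2 = X := hX.symm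
  set Y : ℝ := Real.sqrt 2 * X with hYdef
  have hYnn : 0 ≤ Y := mul_nonneg (Real.sqrt_nonneg _) hXnn
  have hs2 : Real.sqrt 2 ≤ 3 / 2 := by
    nlinarith [Real.sq_sqrt (by norm_num : (0:ℝ) ≤ 2), Real.sqrt_nonneg 2]
  -- pointwise bound on v on all of Icc 0 1
  have hvb : ∀ r ∈ Icc (0:ℝ) 1, |v r| ≤ Y * r ^ (-(1/4) : ℝ) := by
    intro r hr
    rcases eq_or_lt_of_le hr.1 with h0 | h0
    · rw [← h0, Real.zero_rpow (by norm_num), mul_zero]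
      simp [hu'0]
    · have := vbound hwc hu'1 ftc_w ⟨h0, hr.2⟩
      rwa [hXI] at this
  -- bound on u
  have hub : ∀ r ∈ Icc (0:ℝ) 1, |u r| ≤ Y * (4/3) := by
    intro r hr
    have h1 : u r = -(∫ s in r..1, v s) := by rw [ftc_v r 1, hu1]; ring
    have hint_rpow : IntervalIntegrable (fun s : ℝ => Y * s ^ (-(1/4) : ℝ)) volume 0 1 :=
      (intervalIntegrable_rpow' (by norm_num)).const_mul Y
    have h2 : |u r| ≤ ∫ s in r..1, |v s| := by
      rw [h1, abs_neg]; exact abs_integral_le_integral_abs hr.2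
    have h3 : (∫ s in r..1, |v s|) ≤ ∫ s in (0:ℝ)..1, |v s| := by
      have hsplit : (∫ s in (0:ℝ)..r, |v s|) + (∫ s in r..1, |v s|) = ∫ s in (0:ℝ)..1, |v s| :=
        integral_add_adjacent_intervals (hvc.abs.intervalIntegrable _ _)
          (hvc.abs.intervalIntegrable _ _)
      have : 0 ≤ ∫ s in (0:ℝ)..r, |v s| :=
        integral_nonneg hr.1 (fun x _ => abs_nonneg _)
      linarith
    have h4 : (∫ s in (0:ℝ)..1, |v s|) ≤ ∫ s in (0:ℝ)..1, Y * s ^ (-(1/4) : ℝ) :=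
      integral_mono_on (by norm_num) (hvc.abs.intervalIntegrable _ _) hint_rpow hvb
    have h5 : (∫ s in (0:ℝ)..1, Y * s ^ (-(1/4) : ℝ)) = Y * (4/3) := by
      rw [intervalIntegral.integral_const_mul, integral_rpow (Or.inl (by norm_num))]
      norm_num [Real.zero_rpow]
    linarith
  -- cubic term bound
  have hcub : -(Y ^ 3 * 4) ≤ ∫ s in (0:ℝ)..1, v s ^ 3 := by
    have hpt : ∀ s ∈ Icc (0:ℝ) 1, -(Y ^ 3 * s ^ (-(3/4) : ℝ)) ≤ v s ^ 3 := by
      intro s hs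
      have h1 : |v s| ^ 3 ≤ (Y * s ^ (-(1/4) : ℝ)) ^ 3 :=
        pow_le_pow_left₀ (abs_nonneg _) (hvb s hs) 3
      have h2 : (Y * s ^ (-(1/4) : ℝ)) ^ 3 = Y ^ 3 * s ^ (-(3/4) : ℝ) := by
        rw [mul_pow, ← Real.rpow_natCast (s ^ (-(1/4):ℝ)) 3, ← Real.rpow_mul hs.1]
        norm_num
      have h3 : -(|v s| ^ 3) ≤ v s ^ 3 := by
        rw [← abs_pow]; exact neg_abs_le _
      rw [h2] at h1
      linarith
    have hintl : IntervalIntegrable (fun s : ℝ => -(Y ^ 3 * s ^ (-(3/4) : ℝ))) volume 0 1 :=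
      ((intervalIntegrable_rpow' (by norm_num)).const_mul (Y ^ 3)).neg
    have := integral_mono_on (by norm_num : (0:ℝ) ≤ 1) hintl
      ((hvc.pow 3).intervalIntegrable _ _) hpt
    have hval : (∫ s in (0:ℝ)..1, -(Y ^ 3 * s ^ (-(3/4) : ℝ))) = -(Y ^ 3 * 4) := by
      rw [intervalIntegral.integral_neg, intervalIntegral.integral_const_mul, integral_rpow (Or.inl (by norm_num))]
      norm_num [Real.zero_rpow]
    rw [← hval]; exact this
  -- load term bound
  have hF : 0 ≤ ∫ r in (0:ℝ)..1, f r * r := by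
    apply intervalIntegral.integral_nonneg (by norm_num)
    intro x hx; exact mul_nonneg (hf x hx) hx.1
  have hload : (∫ r in (0:ℝ)..1, f r * u r * r) ≤ (Y * (4/3)) * ∫ r in (0:ℝ)..1, f r * r := by
    rw [integral_of_le (by norm_num : (0:ℝ) ≤ 1), integral_of_le (by norm_num : (0:ℝ) ≤ 1),
      ← MeasureTheory.integral_const_mul]
    have hint1 : IntegrableOn (fun x => f x * u x * x) (Ioc (0:ℝ) 1) volume := by
      have he : (fun x => f x * u x * x) = fun x => u x * (f x * x) := by
        funext x; ring
      rw [he]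
      exact hfint.bdd_mul huc.aestronglyMeasurable.restrict
        ((ae_restrict_iff' measurableSet_Ioc).mpr (ae_of_all _ fun x hx => by
          rw [Real.norm_eq_abs]
          exact hub x ⟨hx.1.le, hx.2⟩))
    have hint2 : IntegrableOn (fun x => (Y * (4/3)) * (f x * x)) (Ioc (0:ℝ) 1) volume :=
      hfint.const_mul _
    refine setIntegral_mono_on hint1 hint2 measurableSet_Ioc (fun x hx => ?_)
    have h1 : u x ≤ Y * (4/3) := le_of_abs_le (hub x ⟨hx.1.le, hx.2⟩)
    have h2 : 0 ≤ f x * x := mul_nonneg (hf x ⟨hx.1.le, hx.2⟩) hx.1.le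
    calc f x * u x * x = (f x * x) * u x := by ring
      _ ≤ (f x * x) * (Y * (4/3)) := mul_le_mul_of_nonneg_left h1 h2
      _ = (Y * (4/3)) * (f x * x) := by ring
  -- quadratic term bound
  have hquad : I2 ≤ ∫ r in (0:ℝ)..1, (w r ^ 2 + v r ^ 2 / r ^ 2) * r := by
    obtain ⟨z, hz, hzmax⟩ := (isCompact_Icc (a := (0:ℝ)) (b := 1)).exists_isMaxOn
      ⟨0, by norm_num⟩ hwc.abs.continuousOn
    set M : ℝ := |w z| with hMdef
    have hMnn : 0 ≤ M := abs_nonneg _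
    have hvM : ∀ r ∈ Icc (0:ℝ) 1, |v r| ≤ M * r := by
      intro r hr
      have h1 : v r = ∫ x in (0:ℝ)..r, w x := by rw [ftc_w 0 r, hu'0]; ring
      have h2 : ‖∫ x in (0:ℝ)..r, w x‖ ≤ M * |r - 0| := by
        apply intervalIntegral.norm_integral_le_of_norm_le_const
        intro x hx
        rw [uIoc_of_le hr.1] at hx
        exact hzmax ⟨hx.1.le, le_trans hx.2 hr.2⟩
      rw [h1, ← Real.norm_eq_abs]
      simpa [abs_of_nonneg hr.1] using h2
    have hint2 : IntegrableOn (fun r => v r ^ 2 / r ^ 2 * r) (Ioc (0:ℝ) 1) volume := by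
      refine Measure.integrableOn_of_bounded (M := M ^ 2) measure_Ioc_lt_top.ne
        ((((hvc.measurable.pow_const 2).div (measurable_id.pow_const 2)).mul
          measurable_id).aestronglyMeasurable) ?_
      · refine (ae_restrict_iff' measurableSet_Ioc).mpr (ae_of_all _ fun x hx => ?_)
        have hx0 : 0 < x := hx.1
        have h1 : v x ^ 2 ≤ M ^ 2 * x ^ 2 := by
          have := hvM x ⟨hx0.le, hx.2⟩
          nlinarith [abs_nonneg (v x), sq_abs (v x)]
        have h2 : v x ^ 2 / x ^ 2 * x ≤ M ^ 2 * x := by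
          rw [div_mul_eq_mul_div, div_le_iff₀ (by positivity)]
          nlinarith
        have h3 : 0 ≤ v x ^ 2 / x ^ 2 * x := by positivity
        rw [Real.norm_eq_abs, abs_of_nonneg h3]
        nlinarith [hx.2]
    have hint1 : IntegrableOn (fun r => w r ^ 2 * r) (Ioc (0:ℝ) 1) volume :=
      ((hwc.pow 2).mul continuous_id).integrableOn_Ioc
    have hsplit : (∫ r in (0:ℝ)..1, (w r ^ 2 + v r ^ 2 / r ^ 2) * r)
        = (∫ r in Ioc (0:ℝ) 1, w r ^ 2 * r) + ∫ r in Ioc (0:ℝ) 1, v r ^ 2 / r ^ 2 * r := by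
      rw [integral_of_le (by norm_num : (0:ℝ) ≤ 1)]
      rw [← integral_add hint1 hint2]
      refine setIntegral_congr_fun measurableSet_Ioc (fun x _ => ?_)
      ring
    have hnn2 : 0 ≤ ∫ r in Ioc (0:ℝ) 1, v r ^ 2 / r ^ 2 * r := by
      refine setIntegral_nonneg measurableSet_Ioc (fun x hx => ?_)
      have := hx.1; positivity
    have hI2eq : I2 = ∫ r in Ioc (0:ℝ) 1, w r ^ 2 * r := by
      rw [hI2def, integral_of_le (by norm_num : (0:ℝ) ≤ 1)]
    rw [hsplit, ← hI2eq]
    linarith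
  -- assemble
  have hY3 : Y ^ 3 ≤ 3 * X ^ 3 := by
    have : Y ^ 3 = (Real.sqrt 2) ^ 2 * Real.sqrt 2 * X ^ 3 := by rw [hYdef]; ring
    rw [this, Real.sq_sqrt (by norm_num : (0:ℝ) ≤ 2)]
    nlinarith [pow_nonneg hXnn 3, Real.sqrt_nonneg 2]
  rw [Jfun]
  have hterm1 : (1/2) * X ^ 2 ≤ (1/2) * ∫ r in (0:ℝ)..1, (w r ^ 2 + v r ^ 2 / r ^ 2) * r := by
    rw [hX2]; linarith
  have hterm2 : -(2 * X ^ 3) ≤ (1/6) * ∫ s in (0:ℝ)..1, v s ^ 3 := by linarith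
  have hterm3 : lam * (∫ r in (0:ℝ)..1, f r * u r * r)
      ≤ 2 * lam * (∫ r in (0:ℝ)..1, f r * r) * X := by
    have h1 := mul_le_mul_of_nonneg_left hload hlam
    have hY2X : Y * (4/3) ≤ 2 * X := by
      rw [hYdef]; nlinarith
    have h2 : lam * ((Y * (4/3)) * ∫ r in (0:ℝ)..1, f r * r)
        ≤ lam * ((2 * X) * ∫ r in (0:ℝ)..1, f r * r) :=
      mul_le_mul_of_nonneg_left (mul_le_mul_of_nonneg_right hY2X hF) hlam
    have h3 : lam * ((2 * X) * ∫ r in (0:ℝ)..1, f r * r)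
        = 2 * lam * (∫ r in (0:ℝ)..1, f r * r) * X := by ring
    linarith
  linarith
end

section
/- Let λ ≥ 0, f ∈ L¹([0,1], r dr), L ∈ ℝ, and let {uₙ} be a sequence of smooth functions on [0,1] satisfying uₙ'(0) = 0, uₙ(1) = 0, uₙ'(1) = 0, which is bounded in the norm ‖u‖ = ( ∫₀¹ [u² + (u')²/r² + (u'')²] r dr )^{1/2}, and which is a Palais–Smale sequence for J_λ at level L, meaning: J_λ(uₙ) → L, and sup { |J_λ'(uₙ)[φ]| : φ smooth with φ'(0)=0, φ(1)=0, φ'(1)=0, ‖φ‖ ≤ 1 } → 0 as n → ∞, where J_λ'(u)[φ] = ∫₀¹ [u''φ'' + u'φ'/r²] r dr + (1/2)∫₀¹ (u')²φ' dr − λ∫₀¹ fφ r dr. Then {uₙ} admits a subsequence that is Cauchy with respect to the norm u ↦ ( ∫₀¹ (u''(r) + u'(r)/r)² r dr )^{1/2}. -/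
open MeasureTheory Set Filter

/-- The first variation (derivative) of `J_λ` at `u` in the direction `φ`. -/
noncomputable def Jpair (lam : ℝ) (f u φ : ℝ → ℝ) : ℝ :=
  (∫ r in (0:ℝ)..1,
      (deriv (deriv u) r * deriv (deriv φ) r + deriv u r * deriv φ r / r ^ 2) * r)
    + (1 / 2) * (∫ r in (0:ℝ)..1, (deriv u r) ^ 2 * deriv φ r)
    - lam * ∫ r in (0:ℝ)..1, f r * φ r * r

/-- The squared radial `W^{2,2}([0,1], r dr)` norm. -/
noncomputable def W22normSq (u : ℝ → ℝ) : ℝ :=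
  ∫ r in (0:ℝ)..1, ((u r) ^ 2 + (deriv u r) ^ 2 / r ^ 2 + (deriv (deriv u) r) ^ 2) * r


private lemma div_sq_mul (x r : ℝ) : x / r ^ 2 * r = x / r := by
  rcases eq_or_ne r 0 with rfl | h
  · simp
  · field_simp

private lemma integral_cs {α : Type*} [MeasurableSpace α] (μ : Measure α) (f g : α → ℝ)
    (hf : Integrable (fun x => f x ^ 2) μ) (hg : Integrable (fun x => g x ^ 2) μ)
    (hfg : Integrable (fun x => f x * g x) μ) :
    (∫ x, f x * g x ∂μ) ^ 2 ≤ (∫ x, f x ^ 2 ∂μ) * (∫ x, g x ^ 2 ∂μ) := by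
  set F := ∫ x, f x ^ 2 ∂μ with hF
  set G := ∫ x, g x ^ 2 ∂μ with hG
  set I := ∫ x, f x * g x ∂μ with hI
  have key : ∀ t : ℝ, 0 ≤ F * (t * t) + (2 * I) * t + G := by
    intro t
    have h1 : (fun x => (t * f x + g x) ^ 2)
        = fun x => (t * t) * f x ^ 2 + ((2 * t) * (f x * g x) + g x ^ 2) := by
      funext x; ring
    have h0 : (0:ℝ) ≤ ∫ x, (t * f x + g x) ^ 2 ∂μ :=
      integral_nonneg fun x => sq_nonneg _
    have hgsum : Integrable (fun x => (2 * t) * (f x * g x) + g x ^ 2) μ :=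
      (hfg.const_mul _).add hg
    have h2 : ∫ x, (t * f x + g x) ^ 2 ∂μ = (t * t) * F + ((2 * t) * I + G) := by
      rw [h1, integral_add (hf.const_mul _) hgsum,
        integral_add (hfg.const_mul _) hg, integral_const_mul, integral_const_mul]
    rw [h2] at h0; linarith
  have hd := discrim_le_zero key
  rw [discrim] at hd
  nlinarith [hd]

private lemma abs_integral_cs {α : Type*} [MeasurableSpace α] (μ : Measure α) (f g : α → ℝ)
    (hf : Integrable (fun x => f x ^ 2) μ) (hg : Integrable (fun x => g x ^ 2) μ)
    (hfg : Integrable (fun x => f x * g x) μ) :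
    |∫ x, f x * g x ∂μ| ≤ Real.sqrt (∫ x, f x ^ 2 ∂μ) * Real.sqrt (∫ x, g x ^ 2 ∂μ) := by
  have h := integral_cs μ f g hf hg hfg
  have h1 : |∫ x, f x * g x ∂μ| ≤ Real.sqrt ((∫ x, f x ^ 2 ∂μ) * (∫ x, g x ^ 2 ∂μ)) :=
    Real.abs_le_sqrt h
  rwa [Real.sqrt_mul (integral_nonneg fun x => sq_nonneg _)] at h1

/-- continuity on [0,1] of `r ↦ v r * V r / r` when both vanish at `0`. -/
private lemma contOn_mul_div {v V : ℝ → ℝ} (hv : Continuous v) (hV : Continuous V)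
    (hVd : DifferentiableAt ℝ V 0) (hV0 : V 0 = 0) (hv0 : v 0 = 0) :
    ContinuousOn (fun r => v r * V r / r) (Icc (0:ℝ) 1) := by
  intro r hr
  rcases eq_or_ne r 0 with rfl | hr0
  · rw [← continuousWithinAt_diff_self]
    have hslope : Tendsto (fun s => V s / s) (nhdsWithin 0 {(0:ℝ)}ᶜ) (nhds (deriv V 0)) := by
      have h := hasDerivAt_iff_tendsto_slope.mp hVd.hasDerivAt
      refine h.congr (fun s => ?_)
      simp [slope_def_field, hV0]
    have hmono : nhdsWithin (0:ℝ) (Icc (0:ℝ) 1 \ {0}) ≤ nhdsWithin 0 {(0:ℝ)}ᶜ :=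
      nhdsWithin_mono 0 (fun x hx => hx.2)
    have hvt : Tendsto v (nhdsWithin (0:ℝ) (Icc (0:ℝ) 1 \ {0})) (nhds 0) := by
      have h := hv.tendsto 0
      rw [hv0] at h
      exact h.mono_left nhdsWithin_le_nhds
    have hVt : Tendsto (fun s => V s / s) (nhdsWithin (0:ℝ) (Icc (0:ℝ) 1 \ {0}))
        (nhds (deriv V 0)) := hslope.mono_left hmono
    have hmul : Tendsto (fun s => v s * (V s / s)) (nhdsWithin (0:ℝ) (Icc (0:ℝ) 1 \ {0}))
        (nhds (0 * deriv V 0)) := hvt.mul hVt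
    have : ContinuousWithinAt (fun r => v r * V r / r) (Icc (0:ℝ) 1 \ {0}) 0 := by
      unfold ContinuousWithinAt
      have heq : (fun r => v r * V r / r) = fun s => v s * (V s / s) := by
        funext s; rw [mul_div_assoc]
      rw [heq]
      simpa [hv0] using hmul
    exact this
  · have : ContinuousAt (fun r => v r * V r / r) r := by
      exact ((hv.continuousAt.mul hV.continuousAt).div continuousAt_id hr0)
    exact this.continuousWithinAt

private lemma diffble {u : ℝ → ℝ} (hu : ContDiff ℝ (⊤:ℕ∞) u) : Differentiable ℝ u :=
  hu.differentiable (by simp)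

private lemma smooth_deriv {u : ℝ → ℝ} (hu : ContDiff ℝ (⊤:ℕ∞) u) :
    ContDiff ℝ (⊤:ℕ∞) (deriv u) := (contDiff_infty_iff_deriv.mp hu).2

private lemma deriv_fun_sub' {f g : ℝ → ℝ} (hf : Differentiable ℝ f) (hg : Differentiable ℝ g) :
    deriv (fun r => f r - g r) = fun r => deriv f r - deriv g r :=
  funext fun r => deriv_sub (hf r) (hg r)

private lemma deriv_fun_cmul (c : ℝ) (f : ℝ → ℝ) :
    deriv (fun r => c * f r) = fun r => c * deriv f r :=
  funext fun _ => deriv_const_mul_field c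

/-- continuity of the `W^{2,2}` integrand on `[0,1]`. -/
private lemma contOn_Wint {u : ℝ → ℝ} (hu : ContDiff ℝ (⊤:ℕ∞) u) (hv0 : deriv u 0 = 0) :
    ContinuousOn (fun r => (u r ^ 2 + deriv u r ^ 2 / r ^ 2 + deriv (deriv u) r ^ 2) * r)
      (Icc (0:ℝ) 1) := by
  have hv : ContDiff ℝ (⊤:ℕ∞) (deriv u) := smooth_deriv hu
  have ha : Continuous (deriv (deriv u)) := (smooth_deriv hv).continuous
  have heq : (fun r => (u r ^ 2 + deriv u r ^ 2 / r ^ 2 + deriv (deriv u) r ^ 2) * r)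
      = fun r => (u r ^ 2 * r + deriv (deriv u) r ^ 2 * r) + deriv u r * deriv u r / r := by
    funext r
    rcases eq_or_ne r 0 with rfl | h
    · simp
    · field_simp; ring
  rw [heq]
  exact ((((hu.continuous.pow 2).mul continuous_id).add
    ((ha.pow 2).mul continuous_id)).continuousOn).add
    (contOn_mul_div hv.continuous hv.continuous (diffble hv 0) hv0 hv0)

private lemma Wint_nonneg (u : ℝ → ℝ) {r : ℝ} (hr : 0 ≤ r) :
    0 ≤ (u r ^ 2 + deriv u r ^ 2 / r ^ 2 + deriv (deriv u) r ^ 2) * r :=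
  mul_nonneg (by positivity) hr

private lemma W22_nonneg (u : ℝ → ℝ) : 0 ≤ W22normSq u := by
  rw [W22normSq, intervalIntegral.integral_of_le zero_le_one]
  exact setIntegral_nonneg measurableSet_Ioc fun r hr => Wint_nonneg u hr.1.le

private lemma intOn_Wint {u : ℝ → ℝ} (hu : ContDiff ℝ (⊤:ℕ∞) u) (hv0 : deriv u 0 = 0)
    {x y : ℝ} (hx : 0 ≤ x) (hy : y ≤ 1) :
    IntegrableOn (fun r => (u r ^ 2 + deriv u r ^ 2 / r ^ 2 + deriv (deriv u) r ^ 2) * r)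
      (Ioc x y) volume := by
  refine IntegrableOn.mono_set ((contOn_Wint hu hv0).integrableOn_Icc) ?_
  intro s hs; exact ⟨le_trans hx hs.1.le, le_trans hs.2 hy⟩

private lemma intOn_vsq {u : ℝ → ℝ} (hu : ContDiff ℝ (⊤:ℕ∞) u) (hv0 : deriv u 0 = 0)
    {x y : ℝ} (hx : 0 ≤ x) (hy : y ≤ 1) :
    IntegrableOn (fun s => deriv u s * deriv u s / s) (Ioc x y) volume := by
  have hv : ContDiff ℝ (⊤:ℕ∞) (deriv u) := smooth_deriv hu
  refine IntegrableOn.mono_set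
    ((contOn_mul_div hv.continuous hv.continuous (diffble hv 0) hv0
      hv0).integrableOn_Icc) ?_
  intro s hs; exact ⟨le_trans hx hs.1.le, le_trans hs.2 hy⟩

private lemma partial_bound {u : ℝ → ℝ} {B : ℝ} (hu : ContDiff ℝ (⊤:ℕ∞) u)
    (hv0 : deriv u 0 = 0) (hW : W22normSq u ≤ B) {x y : ℝ}
    (hx : 0 ≤ x) (hy : y ≤ 1) {h : ℝ → ℝ}
    (hint : IntegrableOn h (Ioc x y) volume)
    (hle : ∀ s ∈ Ioc x y,
      h s ≤ (u s ^ 2 + deriv u s ^ 2 / s ^ 2 + deriv (deriv u) s ^ 2) * s) :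
    ∫ s in Ioc x y, h s ≤ B := by
  have hWint := intOn_Wint hu hv0 hx hy
  have step1 : ∫ s in Ioc x y, h s ≤ ∫ s in Ioc x y,
      (u s ^ 2 + deriv u s ^ 2 / s ^ 2 + deriv (deriv u) s ^ 2) * s :=
    setIntegral_mono_on hint hWint measurableSet_Ioc hle
  have hsub : Ioc x y ⊆ Ioc (0:ℝ) 1 := fun s hs => ⟨lt_of_le_of_lt hx hs.1, le_trans hs.2 hy⟩
  have step2 : ∫ s in Ioc x y,
        (u s ^ 2 + deriv u s ^ 2 / s ^ 2 + deriv (deriv u) s ^ 2) * s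
      ≤ ∫ s in Ioc (0:ℝ) 1,
        (u s ^ 2 + deriv u s ^ 2 / s ^ 2 + deriv (deriv u) s ^ 2) * s := by
    refine setIntegral_mono_set (intOn_Wint hu hv0 le_rfl le_rfl) ?_ (.of_forall hsub)
    filter_upwards [ae_restrict_mem measurableSet_Ioc] with s hs
    exact Wint_nonneg u hs.1.le
  have step3 : ∫ s in Ioc (0:ℝ) 1,
      (u s ^ 2 + deriv u s ^ 2 / s ^ 2 + deriv (deriv u) s ^ 2) * s = W22normSq u := by
    rw [W22normSq, intervalIntegral.integral_of_le zero_le_one]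
  linarith

private lemma vsq_le_Wint (u : ℝ → ℝ) {s : ℝ} (hs : 0 < s) :
    deriv u s * deriv u s / s
      ≤ (u s ^ 2 + deriv u s ^ 2 / s ^ 2 + deriv (deriv u) s ^ 2) * s := by
  have h : deriv u s ^ 2 / s ^ 2 * s = deriv u s * deriv u s / s := by
    rw [div_sq_mul]; ring_nf
  nlinarith [sq_nonneg (u s), sq_nonneg (deriv (deriv u) s), hs.le, sq_nonneg (u s) , h,
    mul_nonneg (sq_nonneg (u s)) hs.le, mul_nonneg (sq_nonneg (deriv (deriv u) s)) hs.le]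

private lemma asq_le_Wint (u : ℝ → ℝ) {s : ℝ} (hs : 0 < s) :
    deriv (deriv u) s ^ 2 * s
      ≤ (u s ^ 2 + deriv u s ^ 2 / s ^ 2 + deriv (deriv u) s ^ 2) * s := by
  have h1 : 0 ≤ deriv u s ^ 2 / s ^ 2 := by positivity
  nlinarith [sq_nonneg (u s), hs.le, mul_nonneg (sq_nonneg (u s)) hs.le,
    mul_nonneg h1 hs.le]

/-- the key a-priori bound: `∫ a² s ds ≤ B` on any `Ioc x y ⊆ Ioc 0 1`. -/
private lemma asq_partial {u : ℝ → ℝ} {B : ℝ} (hu : ContDiff ℝ (⊤:ℕ∞) u)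
    (hv0 : deriv u 0 = 0) (hW : W22normSq u ≤ B) {x y : ℝ} (hx : 0 ≤ x) (hy : y ≤ 1) :
    ∫ s in Ioc x y, deriv (deriv u) s ^ 2 * s ≤ B := by
  have ha : Continuous (deriv (deriv u)) := (smooth_deriv (smooth_deriv hu)).continuous
  refine partial_bound hu hv0 hW hx hy ?_
    (fun s hs => asq_le_Wint u (lt_of_le_of_lt hx hs.1))
  exact ((((ha.pow 2).mul continuous_id).continuousOn).integrableOn_Icc).mono_set
    Ioc_subset_Icc_self

private lemma vsq_partial {u : ℝ → ℝ} {B : ℝ} (hu : ContDiff ℝ (⊤:ℕ∞) u)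
    (hv0 : deriv u 0 = 0) (hW : W22normSq u ≤ B) {x y : ℝ} (hx : 0 ≤ x) (hy : y ≤ 1) :
    ∫ s in Ioc x y, deriv u s * deriv u s / s ≤ B :=
  partial_bound hu hv0 hW hx hy (intOn_vsq hu hv0 hx hy) (fun s hs => vsq_le_Wint u (lt_of_le_of_lt hx hs.1))

/-- uniform bound `v(r)² ≤ 2B`. -/
private lemma unif_bound {u : ℝ → ℝ} {B : ℝ} (hu : ContDiff ℝ (⊤:ℕ∞) u)
    (hv0 : deriv u 0 = 0) (hv1 : deriv u 1 = 0) (hW : W22normSq u ≤ B)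
    {r : ℝ} (hr : r ∈ Icc (0:ℝ) 1) : (deriv u r) ^ 2 ≤ 2 * B := by
  have hB : 0 ≤ B := le_trans (W22_nonneg u) hW
  have hv : ContDiff ℝ (⊤:ℕ∞) (deriv u) := smooth_deriv hu
  have hvc : Continuous (deriv u) := hv.continuous
  have hac : Continuous (deriv (deriv u)) := (smooth_deriv hv).continuous
  -- FTC
  have hftc : ∫ s in r..1, 2 * (deriv u s * deriv (deriv u) s)
      = deriv u 1 ^ 2 - deriv u r ^ 2 := by
    refine intervalIntegral.integral_eq_sub_of_hasDerivAt
      (f := fun t => deriv u t ^ 2) (fun x _ => ?_) ?_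
    · have h := ((diffble hv x).hasDerivAt).fun_pow 2
      simpa [mul_comm, mul_assoc, mul_left_comm] using h
    · exact ((continuous_const.mul (hvc.mul hac)).continuousOn).intervalIntegrable
  rw [hv1] at hftc
  have hsplit : (∫ s in Ioc r 1, 2 * (deriv u s * deriv (deriv u) s))
      = 2 * ∫ s in Ioc r 1, deriv u s * deriv (deriv u) s :=
    integral_const_mul 2 _
  have h2 : ∫ s in r..1, 2 * (deriv u s * deriv (deriv u) s)
      = ∫ s in Ioc r 1, 2 * (deriv u s * deriv (deriv u) s) :=
    intervalIntegral.integral_of_le hr.2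
  rw [h2] at hftc
  have key : deriv u r ^ 2 = -(2 * ∫ s in Ioc r 1, deriv u s * deriv (deriv u) s) := by
    rw [← hsplit]; nlinarith [hftc]
  -- Cauchy-Schwarz on Ioc r 1 with weights
  set f : ℝ → ℝ := fun s => deriv u s / Real.sqrt s with hf_def
  set g : ℝ → ℝ := fun s => deriv (deriv u) s * Real.sqrt s with hg_def
  have hf2eq : EqOn (fun s => f s ^ 2) (fun s => deriv u s * deriv u s / s) (Ioc r 1) := by
    intro s hs
    have hs0 : (0:ℝ) ≤ s := le_trans hr.1 hs.1.le
    simp only [hf_def, div_pow, Real.sq_sqrt hs0]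
    ring
  have hg2eq : EqOn (fun s => g s ^ 2) (fun s => deriv (deriv u) s ^ 2 * s) (Ioc r 1) := by
    intro s hs
    have hs0 : (0:ℝ) ≤ s := le_trans hr.1 hs.1.le
    simp only [hg_def, mul_pow, Real.sq_sqrt hs0]
  have hfgeq : EqOn (fun s => f s * g s)
      (fun s => deriv u s * deriv (deriv u) s) (Ioc r 1) := by
    intro s hs
    have hs0 : (0:ℝ) < s := lt_of_le_of_lt hr.1 hs.1
    have : Real.sqrt s ≠ 0 := (Real.sqrt_pos.mpr hs0).ne'
    simp only [hf_def, hg_def]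
    field_simp
  have hf2 : Integrable (fun s => f s ^ 2) (volume.restrict (Ioc r 1)) := by
    have base := intOn_vsq hu hv0 hr.1 (le_refl (1:ℝ))
    exact base.congr_fun hf2eq.symm measurableSet_Ioc
  have hg2 : Integrable (fun s => g s ^ 2) (volume.restrict (Ioc r 1)) := by
    have base : IntegrableOn (fun s => deriv (deriv u) s ^ 2 * s) (Ioc r 1) volume :=
      (((hac.pow 2).mul continuous_id).continuousOn.integrableOn_Icc).mono_set
        Ioc_subset_Icc_self
    exact base.congr_fun hg2eq.symm measurableSet_Ioc
  have hfg : Integrable (fun s => f s * g s) (volume.restrict (Ioc r 1)) := by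
    have base : IntegrableOn (fun s => deriv u s * deriv (deriv u) s) (Ioc r 1) volume :=
      ((hvc.mul hac).continuousOn.integrableOn_Icc).mono_set Ioc_subset_Icc_self
    exact base.congr_fun hfgeq.symm measurableSet_Ioc
  have hcs := abs_integral_cs (volume.restrict (Ioc r 1)) f g hf2 hg2 hfg
  have e1 : ∫ s, f s * g s ∂(volume.restrict (Ioc r 1)) = ∫ s in Ioc r 1, deriv u s * deriv (deriv u) s :=
    setIntegral_congr_fun measurableSet_Ioc hfgeq
  have e2 : ∫ s, f s ^ 2 ∂(volume.restrict (Ioc r 1)) = ∫ s in Ioc r 1, deriv u s * deriv u s / s :=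
    setIntegral_congr_fun measurableSet_Ioc hf2eq
  have e3 : ∫ s, g s ^ 2 ∂(volume.restrict (Ioc r 1)) = ∫ s in Ioc r 1, deriv (deriv u) s ^ 2 * s :=
    setIntegral_congr_fun measurableSet_Ioc hg2eq
  rw [e1, e2, e3] at hcs
  have b2 : ∫ s in Ioc r 1, deriv u s * deriv u s / s ≤ B := vsq_partial hu hv0 hW hr.1 le_rfl
  have b3 : ∫ s in Ioc r 1, deriv (deriv u) s ^ 2 * s ≤ B := asq_partial hu hv0 hW hr.1 le_rfl
  have hsq : Real.sqrt (∫ s in Ioc r 1, deriv u s * deriv u s / s)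
      * Real.sqrt (∫ s in Ioc r 1, deriv (deriv u) s ^ 2 * s) ≤ B := by
    calc _ ≤ Real.sqrt B * Real.sqrt B :=
          mul_le_mul (Real.sqrt_le_sqrt b2) (Real.sqrt_le_sqrt b3) (Real.sqrt_nonneg _)
            (Real.sqrt_nonneg _)
      _ = B := Real.mul_self_sqrt hB
  have habs : |∫ s in Ioc r 1, deriv u s * deriv (deriv u) s| ≤ B := le_trans hcs hsq
  have := abs_le.mp habs
  rw [key]; linarith [this.1]

/-- equicontinuity away from `0`. -/
private lemma equicont {u : ℝ → ℝ} {B : ℝ} (hu : ContDiff ℝ (⊤:ℕ∞) u)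
    (hv0 : deriv u 0 = 0) (hW : W22normSq u ≤ B)
    {x y : ℝ} (hx : 0 < x) (hxy : x ≤ y) (hy : y ≤ 1) :
    (deriv u y - deriv u x) ^ 2 ≤ B * ((y - x) / x) := by
  have hB : 0 ≤ B := le_trans (W22_nonneg u) hW
  have hv : ContDiff ℝ (⊤:ℕ∞) (deriv u) := smooth_deriv hu
  have hac : Continuous (deriv (deriv u)) := (smooth_deriv hv).continuous
  have hftc : ∫ s in x..y, deriv (deriv u) s = deriv u y - deriv u x := by
    refine intervalIntegral.integral_eq_sub_of_hasDerivAt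
      (fun t _ => (diffble hv t).hasDerivAt) (hac.continuousOn.intervalIntegrable)
  set f : ℝ → ℝ := fun s => 1 / Real.sqrt s with hf_def
  set g : ℝ → ℝ := fun s => deriv (deriv u) s * Real.sqrt s with hg_def
  have hf2eq : EqOn (fun s => f s ^ 2) (fun s => 1 / s) (Ioc x y) := by
    intro s hs
    have hs0 : (0:ℝ) ≤ s := le_trans hx.le hs.1.le
    simp only [hf_def, div_pow, Real.sq_sqrt hs0, one_pow]
  have hg2eq : EqOn (fun s => g s ^ 2) (fun s => deriv (deriv u) s ^ 2 * s) (Ioc x y) := by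
    intro s hs
    have hs0 : (0:ℝ) ≤ s := le_trans hx.le hs.1.le
    simp only [hg_def, mul_pow, Real.sq_sqrt hs0]
  have hfgeq : EqOn (fun s => f s * g s) (fun s => deriv (deriv u) s) (Ioc x y) := by
    intro s hs
    have hs0 : (0:ℝ) < s := lt_of_lt_of_le hx hs.1.le
    have : Real.sqrt s ≠ 0 := (Real.sqrt_pos.mpr hs0).ne'
    simp only [hf_def, hg_def]
    field_simp
  have hinv : IntegrableOn (fun s => 1 / s) (Ioc x y) volume := by
    refine (ContinuousOn.integrableOn_Icc ?_).mono_set Ioc_subset_Icc_self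
    intro s hs
    exact (continuousAt_const.div continuousAt_id (ne_of_gt (lt_of_lt_of_le hx hs.1))).continuousWithinAt
  have hf2 : Integrable (fun s => f s ^ 2) (volume.restrict (Ioc x y)) := by
    exact hinv.congr_fun hf2eq.symm measurableSet_Ioc
  have hg2 : Integrable (fun s => g s ^ 2) (volume.restrict (Ioc x y)) := by
    have base : IntegrableOn (fun s => deriv (deriv u) s ^ 2 * s) (Ioc x y) volume :=
      (((hac.pow 2).mul continuous_id).continuousOn.integrableOn_Icc).mono_set
        Ioc_subset_Icc_self
    exact base.congr_fun hg2eq.symm measurableSet_Ioc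
  have hfg : Integrable (fun s => f s * g s) (volume.restrict (Ioc x y)) := by
    have base : IntegrableOn (fun s => deriv (deriv u) s) (Ioc x y) volume :=
      (hac.continuousOn.integrableOn_Icc).mono_set Ioc_subset_Icc_self
    exact base.congr_fun hfgeq.symm measurableSet_Ioc
  have hcs := integral_cs (volume.restrict (Ioc x y)) f g hf2 hg2 hfg
  have e1 : ∫ s, f s * g s ∂(volume.restrict (Ioc x y)) = deriv u y - deriv u x := by
    rw [setIntegral_congr_fun measurableSet_Ioc hfgeq, ← intervalIntegral.integral_of_le hxy,
      hftc]
  have e2 : ∫ s, f s ^ 2 ∂(volume.restrict (Ioc x y)) = Real.log (y / x) := by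
    rw [setIntegral_congr_fun measurableSet_Ioc hf2eq, ← intervalIntegral.integral_of_le hxy]
    exact integral_one_div (by rw [uIcc_of_le hxy]; intro h; exact absurd h.1 (not_le.mpr hx))
  have e3 : ∫ s, g s ^ 2 ∂(volume.restrict (Ioc x y)) = ∫ s in Ioc x y, deriv (deriv u) s ^ 2 * s :=
    setIntegral_congr_fun measurableSet_Ioc hg2eq
  rw [e1, e2, e3] at hcs
  have hlog : Real.log (y / x) ≤ (y - x) / x := by
    have hpos : 0 < y / x := div_pos (lt_of_lt_of_le hx hxy) hx
    have := Real.log_le_sub_one_of_pos hpos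
    have hxne : x ≠ 0 := hx.ne'
    calc Real.log (y / x) ≤ y / x - 1 := this
      _ = (y - x) / x := by field_simp
  have hlog0 : 0 ≤ Real.log (y / x) := by
    refine Real.log_nonneg ?_
    rw [le_div_iff₀ hx]; linarith
  have b3 : ∫ s in Ioc x y, deriv (deriv u) s ^ 2 * s ≤ B := asq_partial hu hv0 hW hx.le hy
  have b30 : 0 ≤ ∫ s in Ioc x y, deriv (deriv u) s ^ 2 * s :=
    setIntegral_nonneg measurableSet_Ioc fun s hs =>
      mul_nonneg (sq_nonneg _) (le_trans hx.le hs.1.le)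
  calc (deriv u y - deriv u x) ^ 2
      ≤ Real.log (y / x) * ∫ s in Ioc x y, deriv (deriv u) s ^ 2 * s := hcs
    _ ≤ ((y - x) / x) * B := mul_le_mul hlog b3 b30 (div_nonneg (by linarith) hx.le)
    _ = B * ((y - x) / x) := by ring

private lemma l2_cauchy {u : ℕ → ℝ → ℝ} {B : ℝ}
    (hsm : ∀ n, ContDiff ℝ (⊤:ℕ∞) (u n))
    (hv0 : ∀ n, deriv (u n) 0 = 0) (hv1 : ∀ n, deriv (u n) 1 = 0)
    (hW : ∀ n, W22normSq (u n) ≤ B) :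
    ∃ ns : ℕ → ℕ, StrictMono ns ∧ ∀ η > (0:ℝ), ∃ N, ∀ m ≥ N, ∀ n ≥ N,
      ∫ s in Ioc (0:ℝ) 1, (deriv (u (ns m)) s - deriv (u (ns n)) s) ^ 2 ≤ η := by
  have hB : 0 ≤ B := le_trans (W22_nonneg (u 0)) (hW 0)
  set K := Real.sqrt (2 * B) with hK_def
  have hK0 : 0 ≤ K := Real.sqrt_nonneg _
  have hKb : ∀ n, ∀ r ∈ Icc (0:ℝ) 1, |deriv (u n) r| ≤ K := fun n r hr =>
    Real.abs_le_sqrt (unif_bound (hsm n) (hv0 n) (hv1 n) (hW n) hr)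
  -- diagonal extraction on rational points
  set ι := {q : ℚ // (q:ℝ) ∈ Ioc (0:ℝ) 1} with hι_def
  set x : ℕ → ι → ℝ := fun n i => deriv (u n) (i.1 : ℝ) with hx_def
  have hs : IsCompact (univ.pi fun _ : ι => Icc (-K) K) :=
    isCompact_univ_pi fun _ => isCompact_Icc
  have hmem : ∀ n, x n ∈ univ.pi fun _ : ι => Icc (-K) K := by
    intro n
    rw [Set.mem_univ_pi]
    intro i
    have := hKb n (i.1 : ℝ) ⟨i.2.1.le, i.2.2⟩
    exact abs_le.mp this
  obtain ⟨a, -, φ, hφ, hconv⟩ := hs.tendsto_subseq hmem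
  have hcoord : ∀ i : ι, Tendsto (fun n => deriv (u (φ n)) (i.1 : ℝ)) atTop (nhds (a i)) := by
    intro i
    exact tendsto_pi_nhds.mp hconv i
  -- pointwise Cauchy on (0,1]
  have hptC : ∀ r ∈ Ioc (0:ℝ) 1, CauchySeq (fun n => deriv (u (φ n)) r) := by
    intro r hr
    rw [Metric.cauchySeq_iff]
    intro ε hε
    set δ := min (r / 2) (r * ε ^ 2 / (18 * (B + 1))) with hδ_def
    have hδpos : 0 < δ := by
      refine lt_min (by linarith [hr.1]) ?_
      exact div_pos (mul_pos hr.1 (pow_pos hε 2)) (by nlinarith)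
    obtain ⟨q, hq1, hq2⟩ := exists_rat_btwn (show r - δ < r by linarith)
    have hq0 : (0:ℝ) < q := by
      have : δ ≤ r / 2 := min_le_left _ _
      linarith [hr.1]
    have hqIoc : (q:ℝ) ∈ Ioc (0:ℝ) 1 := ⟨hq0, le_trans hq2.le hr.2⟩
    -- uniform closeness of v k r and v k q
    have hclose : ∀ k, |deriv (u k) r - deriv (u k) (q:ℝ)| ≤ ε / 3 := by
      intro k
      have heq := equicont (hsm k) (hv0 k) (hW k) hq0 hq2.le hr.2
      have hc : B * ((r - (q:ℝ)) / (q:ℝ)) ≤ ε ^ 2 / 9 := by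
        have h1 : (r - (q:ℝ)) / (q:ℝ) ≤ (r - (q:ℝ)) / (r / 2) := by
          apply div_le_div_of_nonneg_left (by linarith [hq2.le]) (by linarith [hr.1])
          · have : δ ≤ r / 2 := min_le_left _ _
            linarith
        have h2 : (r - (q:ℝ)) / (r / 2) = 2 * (r - (q:ℝ)) / r := by
          field_simp
        have h3 : r - (q:ℝ) < δ := by linarith
        have h4 : δ ≤ r * ε ^ 2 / (18 * (B + 1)) := min_le_right _ _
        have h5 : 2 * (r - (q:ℝ)) / r ≤ ε ^ 2 / (9 * (B + 1)) := by
          rw [div_le_div_iff₀ hr.1 (by positivity)]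
          have : r - (q:ℝ) ≤ r * ε ^ 2 / (18 * (B + 1)) := le_trans h3.le h4
          rw [le_div_iff₀ (by nlinarith : (0:ℝ) < 18 * (B + 1))] at this
          nlinarith [hr.1]
        have h6 : (r - (q:ℝ)) / (q:ℝ) ≤ ε ^ 2 / (9 * (B + 1)) := by
          calc (r - (q:ℝ)) / (q:ℝ) ≤ (r - (q:ℝ)) / (r / 2) := h1
            _ = 2 * (r - (q:ℝ)) / r := h2
            _ ≤ ε ^ 2 / (9 * (B + 1)) := h5
        calc B * ((r - (q:ℝ)) / (q:ℝ)) ≤ B * (ε ^ 2 / (9 * (B + 1))) :=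
              mul_le_mul_of_nonneg_left h6 hB
          _ ≤ ε ^ 2 / 9 := by
              rw [show B * (ε ^ 2 / (9 * (B + 1))) = B * ε ^ 2 / (9 * (B + 1)) by ring,
                div_le_div_iff₀ (by nlinarith : (0:ℝ) < 9 * (B + 1))
                  (by norm_num : (0:ℝ) < 9)]
              nlinarith [sq_nonneg ε]
      have hsq : (deriv (u k) r - deriv (u k) (q:ℝ)) ^ 2 ≤ (ε / 3) ^ 2 := by
        calc (deriv (u k) r - deriv (u k) (q:ℝ)) ^ 2 ≤ B * ((r - (q:ℝ)) / (q:ℝ)) := heq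
          _ ≤ ε ^ 2 / 9 := hc
          _ = (ε / 3) ^ 2 := by ring
      have hε3 : 0 ≤ ε / 3 := by linarith
      exact abs_le.mpr ⟨by nlinarith [abs_nonneg (deriv (u k) r - deriv (u k) (q:ℝ))],
        by nlinarith⟩
    -- Cauchy at coordinate q
    have hCq : CauchySeq (fun n => deriv (u (φ n)) (q:ℝ)) := (hcoord ⟨q, hqIoc⟩).cauchySeq
    obtain ⟨N, hN⟩ := Metric.cauchySeq_iff.mp hCq (ε / 3) (by linarith)
    refine ⟨N, fun m hm n hn => ?_⟩
    have h1 := hclose (φ m)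
    have h2 := hclose (φ n)
    have h3 := hN m hm n hn
    rw [Real.dist_eq] at h3 ⊢
    have : deriv (u (φ m)) r - deriv (u (φ n)) r
        = (deriv (u (φ m)) r - deriv (u (φ m)) (q:ℝ))
          + (deriv (u (φ m)) (q:ℝ) - deriv (u (φ n)) (q:ℝ))
          + (deriv (u (φ n)) (q:ℝ) - deriv (u (φ n)) r) := by ring
    rw [this]
    have t1 := abs_add_le ((deriv (u (φ m)) r - deriv (u (φ m)) (q:ℝ))
        + (deriv (u (φ m)) (q:ℝ) - deriv (u (φ n)) (q:ℝ)))
      (deriv (u (φ n)) (q:ℝ) - deriv (u (φ n)) r)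
    have t2 := abs_add_le (deriv (u (φ m)) r - deriv (u (φ m)) (q:ℝ))
      (deriv (u (φ m)) (q:ℝ) - deriv (u (φ n)) (q:ℝ))
    have h2' : |deriv (u (φ n)) (q:ℝ) - deriv (u (φ n)) r| ≤ ε / 3 := by
      rw [abs_sub_comm]; exact h2
    linarith [t1, t2, h1, h2', h3]
  -- limit function
  have hlim : ∀ r, r ∈ Ioc (0:ℝ) 1 → ∃ l, Tendsto (fun n => deriv (u (φ n)) r) atTop (nhds l) :=
    fun r hr => cauchySeq_tendsto_of_complete (hptC r hr)
  choose! g hg using hlim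
  have hgb : ∀ r ∈ Ioc (0:ℝ) 1, |g r| ≤ K := by
    intro r hr
    have habs : Tendsto (fun n => |deriv (u (φ n)) r|) atTop (nhds |g r|) := (hg r hr).abs
    exact le_of_tendsto habs (Filter.Eventually.of_forall fun n =>
      hKb (φ n) r ⟨hr.1.le, hr.2⟩)
  -- dominated convergence
  have hvc : ∀ n, Continuous (deriv (u n)) := fun n => (smooth_deriv (hsm n)).continuous
  have hglim_ae : ∀ᵐ r ∂(volume.restrict (Ioc (0:ℝ) 1)),
      Tendsto (fun n => deriv (u (φ n)) r) atTop (nhds (g r)) := by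
    filter_upwards [ae_restrict_mem measurableSet_Ioc] with r hr
    exact hg r hr
  have hgm : AEStronglyMeasurable g (volume.restrict (Ioc (0:ℝ) 1)) :=
    aestronglyMeasurable_of_tendsto_ae atTop
      (fun n => ((hvc (φ n)).aestronglyMeasurable)) hglim_ae
  have hFm : ∀ n, AEStronglyMeasurable (fun r => (deriv (u (φ n)) r - g r) ^ 2)
      (volume.restrict (Ioc (0:ℝ) 1)) := fun n =>
    (((hvc (φ n)).aestronglyMeasurable).sub hgm).pow 2
  have hFb : ∀ n, ∀ᵐ r ∂(volume.restrict (Ioc (0:ℝ) 1)),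
      ‖(deriv (u (φ n)) r - g r) ^ 2‖ ≤ (2 * K) ^ 2 := by
    intro n
    filter_upwards [ae_restrict_mem measurableSet_Ioc] with r hr
    have h1 := hKb (φ n) r ⟨hr.1.le, hr.2⟩
    have h2 := hgb r hr
    rw [Real.norm_eq_abs, abs_of_nonneg (sq_nonneg _)]
    have := abs_le.mp h1
    have := abs_le.mp h2
    nlinarith [this.1, this.2]
  have hFlim : ∀ᵐ r ∂(volume.restrict (Ioc (0:ℝ) 1)),
      Tendsto (fun n => (deriv (u (φ n)) r - g r) ^ 2) atTop
        (nhds ((fun _ => (0:ℝ)) r)) := by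
    filter_upwards [hglim_ae] with r hr
    have h := (hr.sub (tendsto_const_nhds (x := g r))).pow 2
    simpa using h
  have hdct := tendsto_integral_of_dominated_convergence (fun _ => (2 * K) ^ 2)
    hFm (integrable_const _) hFb hFlim
  simp only [integral_zero] at hdct
  have hFint : ∀ n, Integrable (fun r => (deriv (u (φ n)) r - g r) ^ 2)
      (volume.restrict (Ioc (0:ℝ) 1)) := fun n =>
    Integrable.mono' (integrable_const _) (hFm n) (hFb n)
  have hFnn : ∀ n, 0 ≤ ∫ r in Ioc (0:ℝ) 1, (deriv (u (φ n)) r - g r) ^ 2 := fun n =>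
    setIntegral_nonneg measurableSet_Ioc fun r _ => sq_nonneg _
  refine ⟨φ, hφ, fun η hη => ?_⟩
  have hev : ∀ᶠ n in atTop,
      (∫ r in Ioc (0:ℝ) 1, (deriv (u (φ n)) r - g r) ^ 2) < η / 4 := by
    have := hdct
    rw [Metric.tendsto_atTop] at this
    obtain ⟨N, hN⟩ := this (η / 4) (by linarith)
    refine eventually_atTop.mpr ⟨N, fun n hn => ?_⟩
    have := hN n hn
    rw [Real.dist_eq, sub_zero] at this
    calc (∫ r in Ioc (0:ℝ) 1, (deriv (u (φ n)) r - g r) ^ 2)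
        ≤ |∫ r in Ioc (0:ℝ) 1, (deriv (u (φ n)) r - g r) ^ 2| := le_abs_self _
      _ < η / 4 := this
  obtain ⟨N, hN⟩ := eventually_atTop.mp hev
  refine ⟨N, fun m hm n hn => ?_⟩
  have hptw : ∀ r ∈ Ioc (0:ℝ) 1, (deriv (u (φ m)) r - deriv (u (φ n)) r) ^ 2
      ≤ 2 * (deriv (u (φ m)) r - g r) ^ 2 + 2 * (deriv (u (φ n)) r - g r) ^ 2 := by
    intro r _
    nlinarith [sq_nonneg ((deriv (u (φ m)) r - g r) - (deriv (u (φ n)) r - g r)),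
      sq_nonneg ((deriv (u (φ m)) r - g r) + (deriv (u (φ n)) r - g r))]
  have hLint : IntegrableOn (fun r => (deriv (u (φ m)) r - deriv (u (φ n)) r) ^ 2)
      (Ioc (0:ℝ) 1) volume :=
    ((((hvc (φ m)).sub (hvc (φ n))).pow 2).continuousOn.integrableOn_Icc).mono_set
      Ioc_subset_Icc_self
  have hRint : Integrable (fun r => 2 * (deriv (u (φ m)) r - g r) ^ 2
        + 2 * (deriv (u (φ n)) r - g r) ^ 2) (volume.restrict (Ioc (0:ℝ) 1)) :=
    ((hFint m).const_mul 2).add ((hFint n).const_mul 2)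
  calc ∫ s in Ioc (0:ℝ) 1, (deriv (u (φ m)) s - deriv (u (φ n)) s) ^ 2
      ≤ ∫ s in Ioc (0:ℝ) 1, (2 * (deriv (u (φ m)) s - g s) ^ 2
          + 2 * (deriv (u (φ n)) s - g s) ^ 2) :=
        setIntegral_mono_on hLint hRint measurableSet_Ioc hptw
    _ = 2 * (∫ s in Ioc (0:ℝ) 1, (deriv (u (φ m)) s - g s) ^ 2)
          + 2 * (∫ s in Ioc (0:ℝ) 1, (deriv (u (φ n)) s - g s) ^ 2) := by
        rw [integral_add ((hFint m).const_mul 2) ((hFint n).const_mul 2),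
          integral_const_mul, integral_const_mul]
    _ ≤ η := by
        have h1 := hN m hm
        have h2 := hN n hn
        linarith

private lemma intervalIntegrable_of_contOn {h : ℝ → ℝ}
    (hc : ContinuousOn h (Icc (0:ℝ) 1)) : IntervalIntegrable h volume 0 1 := by
  apply ContinuousOn.intervalIntegrable
  rwa [uIcc_of_le zero_le_one]

private lemma W22_smul (c : ℝ) (φ : ℝ → ℝ) :
    W22normSq (fun r => c * φ r) = c ^ 2 * W22normSq φ := by
  unfold W22normSq
  rw [deriv_fun_cmul c φ, deriv_fun_cmul c (deriv φ)]
  rw [← intervalIntegral.integral_const_mul]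
  congr 1; funext r; ring

private lemma Jpair_smul (lam c : ℝ) (f u φ : ℝ → ℝ) :
    Jpair lam f u (fun r => c * φ r) = c * Jpair lam f u φ := by
  unfold Jpair
  rw [deriv_fun_cmul c φ, deriv_fun_cmul c (deriv φ)]
  have e1 : (∫ r in (0:ℝ)..1, (deriv (deriv u) r * (c * deriv (deriv φ) r)
      + deriv u r * (c * deriv φ r) / r ^ 2) * r)
      = c * ∫ r in (0:ℝ)..1, (deriv (deriv u) r * deriv (deriv φ) r
      + deriv u r * deriv φ r / r ^ 2) * r := by
    rw [← intervalIntegral.integral_const_mul]; congr 1; funext r; ring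
  have e2 : (∫ r in (0:ℝ)..1, deriv u r ^ 2 * (c * deriv φ r))
      = c * ∫ r in (0:ℝ)..1, deriv u r ^ 2 * deriv φ r := by
    rw [← intervalIntegral.integral_const_mul]; congr 1; funext r; ring
  have e3 : (∫ r in (0:ℝ)..1, f r * (c * φ r) * r)
      = c * ∫ r in (0:ℝ)..1, f r * φ r * r := by
    rw [← intervalIntegral.integral_const_mul]; congr 1; funext r; ring
  rw [e1, e2, e3]; ring

private lemma W22_sub_le {p q : ℝ → ℝ} {B : ℝ} (hp : ContDiff ℝ (⊤:ℕ∞) p)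
    (hq : ContDiff ℝ (⊤:ℕ∞) q) (hp0 : deriv p 0 = 0) (hq0 : deriv q 0 = 0)
    (hWp : W22normSq p ≤ B) (hWq : W22normSq q ≤ B) :
    W22normSq (fun r => p r - q r) ≤ 4 * B := by
  have hw : ContDiff ℝ (⊤:ℕ∞) (fun r => p r - q r) := hp.sub hq
  have hw0 : deriv (fun r => p r - q r) 0 = 0 := by
    rw [deriv_fun_sub' (diffble hp) (diffble hq)]; simp [hp0, hq0]
  have hIw := intervalIntegrable_of_contOn (contOn_Wint hw hw0)
  have hIp := intervalIntegrable_of_contOn (contOn_Wint hp hp0)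
  have hIq := intervalIntegrable_of_contOn (contOn_Wint hq hq0)
  have hmono : W22normSq (fun r => p r - q r) ≤ ∫ r in (0:ℝ)..1,
      2 * ((p r ^ 2 + deriv p r ^ 2 / r ^ 2 + deriv (deriv p) r ^ 2) * r
        + (q r ^ 2 + deriv q r ^ 2 / r ^ 2 + deriv (deriv q) r ^ 2) * r) := by
    unfold W22normSq
    refine intervalIntegral.integral_mono_on zero_le_one hIw
      ((hIp.add hIq).const_mul 2) ?_
    intro r hr
    rw [deriv_fun_sub' (diffble hp) (diffble hq),
      deriv_fun_sub' (diffble (smooth_deriv hp)) (diffble (smooth_deriv hq))]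
    rcases eq_or_ne r 0 with rfl | hr0
    · simp
    · have hrpos : 0 < r := lt_of_le_of_ne hr.1 (Ne.symm hr0)
      have hr2 : (0:ℝ) < r ^ 2 := by positivity
      have e1 : (p r - q r) ^ 2 ≤ 2 * p r ^ 2 + 2 * q r ^ 2 := by
        nlinarith [sq_nonneg (p r + q r)]
      have e2 : (deriv p r - deriv q r) ^ 2 / r ^ 2
          ≤ (2 * deriv p r ^ 2 + 2 * deriv q r ^ 2) / r ^ 2 :=
        (div_le_div_iff_of_pos_right hr2).mpr (by nlinarith [sq_nonneg (deriv p r + deriv q r)])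
      have e3 : (deriv (deriv p) r - deriv (deriv q) r) ^ 2
          ≤ 2 * deriv (deriv p) r ^ 2 + 2 * deriv (deriv q) r ^ 2 := by
        nlinarith [sq_nonneg (deriv (deriv p) r + deriv (deriv q) r)]
      have hsum := add_le_add (add_le_add e1 e2) e3
      have h4 := mul_le_mul_of_nonneg_right hsum hr.1
      have hrw : (2 * p r ^ 2 + 2 * q r ^ 2
          + (2 * deriv p r ^ 2 + 2 * deriv q r ^ 2) / r ^ 2
          + (2 * deriv (deriv p) r ^ 2 + 2 * deriv (deriv q) r ^ 2)) * r
          = 2 * ((p r ^ 2 + deriv p r ^ 2 / r ^ 2 + deriv (deriv p) r ^ 2) * r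
            + (q r ^ 2 + deriv q r ^ 2 / r ^ 2 + deriv (deriv q) r ^ 2) * r) := by
        ring
      linarith [hrw ▸ h4]
  have hsplit : (∫ r in (0:ℝ)..1,
      2 * ((p r ^ 2 + deriv p r ^ 2 / r ^ 2 + deriv (deriv p) r ^ 2) * r
        + (q r ^ 2 + deriv q r ^ 2 / r ^ 2 + deriv (deriv q) r ^ 2) * r))
      = 2 * (W22normSq p + W22normSq q) := by
    rw [intervalIntegral.integral_const_mul, intervalIntegral.integral_add hIp hIq]
    rfl
  rw [hsplit] at hmono
  linarith

/-- the central identity: the `L²(r dr)` norm of the Laplacian difference equals the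
difference of first variations minus the cubic term. -/
private lemma main_identity {lam : ℝ} {f p q : ℝ → ℝ} (hp : ContDiff ℝ (⊤:ℕ∞) p)
    (hq : ContDiff ℝ (⊤:ℕ∞) q) (hp0 : deriv p 0 = 0) (hq0 : deriv q 0 = 0)
    (hp1 : deriv p 1 = 0) (hq1 : deriv q 1 = 0) :
    (∫ r in (0:ℝ)..1, ((deriv (deriv p) r + deriv p r / r)
        - (deriv (deriv q) r + deriv q r / r)) ^ 2 * r)
      = Jpair lam f p (fun r => p r - q r) - Jpair lam f q (fun r => p r - q r)
        - (1 / 2) * ∫ r in (0:ℝ)..1,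
            (deriv p r ^ 2 - deriv q r ^ 2) * (deriv p r - deriv q r) := by
  have hvp : ContDiff ℝ (⊤:ℕ∞) (deriv p) := smooth_deriv hp
  have hvq : ContDiff ℝ (⊤:ℕ∞) (deriv q) := smooth_deriv hq
  have hvpc : Continuous (deriv p) := hvp.continuous
  have hvqc : Continuous (deriv q) := hvq.continuous
  have hapc : Continuous (deriv (deriv p)) := (smooth_deriv hvp).continuous
  have haqc : Continuous (deriv (deriv q)) := (smooth_deriv hvq).continuous
  set V : ℝ → ℝ := fun r => deriv p r - deriv q r with hV_def
  set A : ℝ → ℝ := fun r => deriv (deriv p) r - deriv (deriv q) r with hA_def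
  have hVc : Continuous V := hvpc.sub hvqc
  have hAc : Continuous A := hapc.sub haqc
  have hV0 : V 0 = 0 := by simp [hV_def, hp0, hq0]
  have hV1 : V 1 = 0 := by simp [hV_def, hp1, hq1]
  have hVsm : ContDiff ℝ (⊤:ℕ∞) V := hvp.sub hvq
  have hVd : ∀ t, HasDerivAt V (A t) t := fun t =>
    ((diffble hvp t).hasDerivAt).sub ((diffble hvq t).hasDerivAt)
  -- integrabilities
  have hIA : IntervalIntegrable (fun r => A r ^ 2 * r) volume 0 1 :=
    intervalIntegrable_of_contOn (((hAc.pow 2).mul continuous_id).continuousOn)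
  have hIVV : IntervalIntegrable (fun r => V r * V r / r) volume 0 1 :=
    intervalIntegrable_of_contOn
      (contOn_mul_div hVc hVc (diffble hVsm 0) hV0 hV0)
  have hI2 : IntervalIntegrable (fun r => 2 * (V r * A r)) volume 0 1 :=
    intervalIntegrable_of_contOn
      ((continuous_const.mul (hVc.mul hAc)).continuousOn)
  -- step 1: expansion of the square
  have hexp : (∫ r in (0:ℝ)..1, ((deriv (deriv p) r + deriv p r / r)
      - (deriv (deriv q) r + deriv q r / r)) ^ 2 * r)
      = (∫ r in (0:ℝ)..1, A r ^ 2 * r) + ((∫ r in (0:ℝ)..1, 2 * (V r * A r))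
        + ∫ r in (0:ℝ)..1, V r * V r / r) := by
    rw [← intervalIntegral.integral_add hI2 hIVV, ← intervalIntegral.integral_add hIA
      (hI2.add hIVV)]
    congr 1; funext r
    rcases eq_or_ne r 0 with rfl | hr0
    · simp [hA_def, hV_def, hp0, hq0]
    · field_simp [hA_def, hV_def]; ring
  -- step 2: FTC kills the cross term
  have hftc : (∫ r in (0:ℝ)..1, 2 * (V r * A r)) = 0 := by
    have h := intervalIntegral.integral_eq_sub_of_hasDerivAt
      (f := fun t => V t ^ 2) (f' := fun t => 2 * (V t * A t))
      (fun t _ => by simpa [mul_comm, mul_assoc, mul_left_comm] using (hVd t).fun_pow 2)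
      hI2
    rw [h]
    show V 1 ^ 2 - V 0 ^ 2 = 0
    rw [hV0, hV1]; ring
  -- step 3: the difference of the first variations
  have hwd : deriv (fun r => p r - q r) = V := deriv_fun_sub' (diffble hp) (diffble hq)
  have hwd2 : deriv V = A := deriv_fun_sub' (diffble hvp) (diffble hvq)
  have hIT1p : IntervalIntegrable
      (fun r => (deriv (deriv p) r * A r + deriv p r * V r / r ^ 2) * r) volume 0 1 := by
    have heq : (fun r => (deriv (deriv p) r * A r + deriv p r * V r / r ^ 2) * r)
        = fun r => deriv (deriv p) r * A r * r + deriv p r * V r / r := by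
      funext r
      rcases eq_or_ne r 0 with rfl | hr0
      · simp
      · field_simp
    rw [heq]
    exact intervalIntegrable_of_contOn
      ((((hapc.mul hAc).mul continuous_id).continuousOn).add
        (contOn_mul_div hvpc hVc (diffble hVsm 0) hV0 hp0))
  have hIT1q : IntervalIntegrable
      (fun r => (deriv (deriv q) r * A r + deriv q r * V r / r ^ 2) * r) volume 0 1 := by
    have heq : (fun r => (deriv (deriv q) r * A r + deriv q r * V r / r ^ 2) * r)
        = fun r => deriv (deriv q) r * A r * r + deriv q r * V r / r := by
      funext r
      rcases eq_or_ne r 0 with rfl | hr0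
      · simp
      · field_simp
    rw [heq]
    exact intervalIntegrable_of_contOn
      ((((haqc.mul hAc).mul continuous_id).continuousOn).add
        (contOn_mul_div hvqc hVc (diffble hVsm 0) hV0 hq0))
  have hT1 : (∫ r in (0:ℝ)..1, (deriv (deriv p) r * A r + deriv p r * V r / r ^ 2) * r)
      - (∫ r in (0:ℝ)..1, (deriv (deriv q) r * A r + deriv q r * V r / r ^ 2) * r)
      = (∫ r in (0:ℝ)..1, A r ^ 2 * r) + ∫ r in (0:ℝ)..1, V r * V r / r := by
    rw [← intervalIntegral.integral_sub hIT1p hIT1q,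
      ← intervalIntegral.integral_add hIA hIVV]
    congr 1; funext r
    rcases eq_or_ne r 0 with rfl | hr0
    · simp
    · field_simp [hA_def, hV_def]; ring
  have hIvsqp : IntervalIntegrable (fun r => deriv p r ^ 2 * V r) volume 0 1 :=
    intervalIntegrable_of_contOn (((hvpc.pow 2).mul hVc).continuousOn)
  have hIvsqq : IntervalIntegrable (fun r => deriv q r ^ 2 * V r) volume 0 1 :=
    intervalIntegrable_of_contOn (((hvqc.pow 2).mul hVc).continuousOn)
  have hT2 : (∫ r in (0:ℝ)..1, deriv p r ^ 2 * V r)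
      - (∫ r in (0:ℝ)..1, deriv q r ^ 2 * V r)
      = ∫ r in (0:ℝ)..1, (deriv p r ^ 2 - deriv q r ^ 2) * (deriv p r - deriv q r) := by
    rw [← intervalIntegral.integral_sub hIvsqp hIvsqq]
    congr 1; funext r
    simp only [hV_def]; ring
  unfold Jpair
  rw [hwd, hwd2]
  rw [hexp, hftc]
  linarith [hT1, hT2]

private lemma cubic_bound {p q : ℝ → ℝ} {K : ℝ} (hvpc : Continuous (deriv p))
    (hvqc : Continuous (deriv q)) (hK : 0 ≤ K)
    (hbp : ∀ r ∈ Icc (0:ℝ) 1, |deriv p r| ≤ K)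
    (hbq : ∀ r ∈ Icc (0:ℝ) 1, |deriv q r| ≤ K) :
    |∫ r in (0:ℝ)..1, (deriv p r ^ 2 - deriv q r ^ 2) * (deriv p r - deriv q r)|
      ≤ 2 * K * ∫ r in Ioc (0:ℝ) 1, (deriv p r - deriv q r) ^ 2 := by
  have h1 := intervalIntegral.abs_integral_le_integral_abs (μ := volume)
    (f := fun r => (deriv p r ^ 2 - deriv q r ^ 2) * (deriv p r - deriv q r)) zero_le_one
  have h2 : (∫ r in (0:ℝ)..1,
      |(deriv p r ^ 2 - deriv q r ^ 2) * (deriv p r - deriv q r)|)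
      ≤ ∫ r in (0:ℝ)..1, 2 * K * (deriv p r - deriv q r) ^ 2 := by
    refine intervalIntegral.integral_mono_on zero_le_one ?_ ?_ ?_
    · exact intervalIntegrable_of_contOn
        ((((hvpc.pow 2).sub (hvqc.pow 2)).mul (hvpc.sub hvqc)).abs.continuousOn)
    · exact intervalIntegrable_of_contOn
        ((continuous_const.mul ((hvpc.sub hvqc).pow 2)).continuousOn)
    · intro r hr
      have hp' := hbp r hr
      have hq' := hbq r hr
      have heq : |(deriv p r ^ 2 - deriv q r ^ 2) * (deriv p r - deriv q r)|
          = |deriv p r + deriv q r| * (deriv p r - deriv q r) ^ 2 := by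
        rw [show (deriv p r ^ 2 - deriv q r ^ 2) * (deriv p r - deriv q r)
          = (deriv p r + deriv q r) * (deriv p r - deriv q r) ^ 2 by ring, abs_mul,
          abs_pow, sq_abs]
      rw [heq]
      have habs : |deriv p r + deriv q r| ≤ 2 * K :=
        le_trans (abs_add_le _ _) (by linarith)
      exact mul_le_mul_of_nonneg_right habs (sq_nonneg _)
  have h3 : (∫ r in (0:ℝ)..1, 2 * K * (deriv p r - deriv q r) ^ 2)
      = 2 * K * ∫ r in Ioc (0:ℝ) 1, (deriv p r - deriv q r) ^ 2 := by
    rw [intervalIntegral.integral_const_mul, intervalIntegral.integral_of_le zero_le_one]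
  linarith [le_trans h1 (h3 ▸ h2)]


set_option maxHeartbeats 1000000 in
/-- Every bounded Palais–Smale sequence for `J_λ` (Dirichlet boundary conditions)
admits a subsequence which is Cauchy in the `L²(r dr)` norm of the radial Laplacian. -/
theorem stmt9 (lam : ℝ) (hlam : 0 ≤ lam) (f : ℝ → ℝ)
    (hf_int : IntegrableOn (fun r => f r * r) (Ioc 0 1) volume) (L : ℝ)
    (u : ℕ → ℝ → ℝ) (hsm : ∀ n, ContDiff ℝ (⊤ : ℕ∞) (u n))
    (hbc : ∀ n, deriv (u n) 0 = 0 ∧ u n 1 = 0 ∧ deriv (u n) 1 = 0)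
    (hbdd : ∃ B : ℝ, ∀ n, W22normSq (u n) ≤ B)
    (hPS1 : Tendsto (fun n => Jfun lam f (u n)) atTop (nhds L))
    (hPS2 : ∀ ε > (0:ℝ), ∃ N : ℕ, ∀ n ≥ N, ∀ φ : ℝ → ℝ,
      ContDiff ℝ (⊤ : ℕ∞) φ → deriv φ 0 = 0 → φ 1 = 0 → deriv φ 1 = 0 →
      W22normSq φ ≤ 1 → |Jpair lam f (u n) φ| ≤ ε) :
    ∃ ns : ℕ → ℕ, StrictMono ns ∧
      ∀ ε > (0:ℝ), ∃ N : ℕ, ∀ m ≥ N, ∀ n ≥ N,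
        Real.sqrt (∫ r in (0:ℝ)..1,
          ((deriv (deriv (u (ns m))) r + deriv (u (ns m)) r / r)
            - (deriv (deriv (u (ns n))) r + deriv (u (ns n)) r / r)) ^ 2 * r) < ε := by
  obtain ⟨B, hB⟩ := hbdd
  have hB0 : 0 ≤ B := le_trans (W22_nonneg (u 0)) (hB 0)
  obtain ⟨ns, hns, hL2⟩ :=
    l2_cauchy hsm (fun n => (hbc n).1) (fun n => (hbc n).2.2) hB
  refine ⟨ns, hns, ?_⟩
  intro ε hε
  set K := Real.sqrt (2 * B) with hK_def
  have hK0 : 0 ≤ K := Real.sqrt_nonneg _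
  set M := Real.sqrt (4 * B) + 1 with hM_def
  have hM0 : 0 < M := by
    rw [hM_def]; positivity
  obtain ⟨N₁, hN₁⟩ := hPS2 (ε ^ 2 / (8 * M)) (div_pos (pow_pos hε 2) (by linarith))
  obtain ⟨N₂, hN₂⟩ := hL2 (ε ^ 2 / (4 * (K + 1)))
    (div_pos (pow_pos hε 2) (by linarith))
  refine ⟨max N₁ N₂, fun m hm n hn => ?_⟩
  set p := u (ns m) with hp_def
  set q := u (ns n) with hq_def
  have hpsm : ContDiff ℝ (⊤:ℕ∞) p := hsm _
  have hqsm : ContDiff ℝ (⊤:ℕ∞) q := hsm _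
  have hp0 : deriv p 0 = 0 := (hbc _).1
  have hq0 : deriv q 0 = 0 := (hbc _).1
  have hp1 : deriv p 1 = 0 := (hbc _).2.2
  have hq1 : deriv q 1 = 0 := (hbc _).2.2
  have hpe : p 1 = 0 := (hbc _).2.1
  have hqe : q 1 = 0 := (hbc _).2.1
  -- the test function
  have hS4B : W22normSq (fun r => p r - q r) ≤ 4 * B :=
    W22_sub_le hpsm hqsm hp0 hq0 (hB _) (hB _)
  set S := W22normSq (fun r => p r - q r) with hS_def
  have hS0 : 0 ≤ S := W22_nonneg _
  set c := (Real.sqrt S + 1)⁻¹ with hc_def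
  have hSs : 0 ≤ Real.sqrt S := Real.sqrt_nonneg _
  have hc0 : 0 < c := by rw [hc_def]; positivity
  have hφsm : ContDiff ℝ (⊤:ℕ∞) (fun r => c * (p r - q r)) :=
    contDiff_const.mul (hpsm.sub hqsm)
  have hwd : deriv (fun r => p r - q r) = fun r => deriv p r - deriv q r :=
    deriv_fun_sub' (diffble hpsm) (diffble hqsm)
  have hφd : deriv (fun r => c * (p r - q r))
      = fun r => c * deriv (fun r => p r - q r) r := deriv_fun_cmul c _
  have hφ0 : deriv (fun r => c * (p r - q r)) 0 = 0 := by
    rw [hφd, hwd]; simp [hp0, hq0]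
  have hφ1 : deriv (fun r => c * (p r - q r)) 1 = 0 := by
    rw [hφd, hwd]; simp [hp1, hq1]
  have hφe : (fun r => c * (p r - q r)) 1 = 0 := by simp [hpe, hqe]
  have hφW : W22normSq (fun r => c * (p r - q r)) ≤ 1 := by
    rw [W22_smul]
    have hsq : Real.sqrt S ^ 2 = S := Real.sq_sqrt hS0
    have h1 : S ≤ (Real.sqrt S + 1) ^ 2 := by nlinarith
    have hne : Real.sqrt S + 1 ≠ 0 := by positivity
    calc c ^ 2 * S ≤ c ^ 2 * (Real.sqrt S + 1) ^ 2 :=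
          mul_le_mul_of_nonneg_left h1 (by positivity)
      _ = 1 := by rw [hc_def, ← mul_pow, inv_mul_cancel₀ hne, one_pow]
  -- PS estimates
  have hm1 : ns m ≥ N₁ := le_trans (le_trans (le_max_left _ _) hm) hns.le_apply
  have hn1 : ns n ≥ N₁ := le_trans (le_trans (le_max_left _ _) hn) hns.le_apply
  have hJp := hN₁ (ns m) hm1 _ hφsm hφ0 hφe hφ1 hφW
  have hJq := hN₁ (ns n) hn1 _ hφsm hφ0 hφe hφ1 hφW
  rw [Jpair_smul] at hJp hJq
  have hSM : Real.sqrt S + 1 ≤ M := by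
    rw [hM_def]
    have := Real.sqrt_le_sqrt hS4B
    linarith
  have habsP : |Jpair lam f p (fun r => p r - q r)| ≤ ε ^ 2 / (8 * M) * M := by
    rw [abs_mul, abs_of_pos hc0, hc_def, inv_mul_le_iff₀ (by positivity)] at hJp
    calc |Jpair lam f p (fun r => p r - q r)|
        ≤ (Real.sqrt S + 1) * (ε ^ 2 / (8 * M)) := hJp
      _ ≤ M * (ε ^ 2 / (8 * M)) := by
          apply mul_le_mul_of_nonneg_right hSM (by positivity)
      _ = ε ^ 2 / (8 * M) * M := by ring
  have habsQ : |Jpair lam f q (fun r => p r - q r)| ≤ ε ^ 2 / (8 * M) * M := by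
    rw [abs_mul, abs_of_pos hc0, hc_def, inv_mul_le_iff₀ (by positivity)] at hJq
    calc |Jpair lam f q (fun r => p r - q r)|
        ≤ (Real.sqrt S + 1) * (ε ^ 2 / (8 * M)) := hJq
      _ ≤ M * (ε ^ 2 / (8 * M)) := by
          apply mul_le_mul_of_nonneg_right hSM (by positivity)
      _ = ε ^ 2 / (8 * M) * M := by ring
  have hMeval : ε ^ 2 / (8 * M) * M = ε ^ 2 / 8 := by
    field_simp
  rw [hMeval] at habsP habsQ
  -- cubic estimate
  have hKbp : ∀ r ∈ Icc (0:ℝ) 1, |deriv p r| ≤ K := fun r hr =>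
    Real.abs_le_sqrt (unif_bound hpsm hp0 hp1 (hB _) hr)
  have hKbq : ∀ r ∈ Icc (0:ℝ) 1, |deriv q r| ≤ K := fun r hr =>
    Real.abs_le_sqrt (unif_bound hqsm hq0 hq1 (hB _) hr)
  have hvpc : Continuous (deriv p) := (smooth_deriv hpsm).continuous
  have hvqc : Continuous (deriv q) := (smooth_deriv hqsm).continuous
  have hcb := cubic_bound hvpc hvqc hK0 hKbp hKbq
  have hm2 : m ≥ N₂ := le_trans (le_max_right _ _) hm
  have hn2 : n ≥ N₂ := le_trans (le_max_right _ _) hn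
  have hδ : (∫ r in Ioc (0:ℝ) 1, (deriv p r - deriv q r) ^ 2) ≤ ε ^ 2 / (4 * (K + 1)) :=
    hN₂ m hm2 n hn2
  have hδ0 : 0 ≤ ∫ r in Ioc (0:ℝ) 1, (deriv p r - deriv q r) ^ 2 :=
    setIntegral_nonneg measurableSet_Ioc fun r _ => sq_nonneg _
  have hcub : |∫ r in (0:ℝ)..1,
      (deriv p r ^ 2 - deriv q r ^ 2) * (deriv p r - deriv q r)| ≤ ε ^ 2 / 2 := by
    calc |∫ r in (0:ℝ)..1, (deriv p r ^ 2 - deriv q r ^ 2) * (deriv p r - deriv q r)|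
        ≤ 2 * K * ∫ r in Ioc (0:ℝ) 1, (deriv p r - deriv q r) ^ 2 := hcb
      _ ≤ 2 * K * (ε ^ 2 / (4 * (K + 1))) :=
          mul_le_mul_of_nonneg_left hδ (by positivity)
      _ ≤ ε ^ 2 / 2 := by
          rw [show 2 * K * (ε ^ 2 / (4 * (K + 1))) = 2 * K * ε ^ 2 / (4 * (K + 1)) by ring,
            div_le_div_iff₀ (by positivity : (0:ℝ) < 4 * (K + 1)) (by norm_num : (0:ℝ) < 2)]
          nlinarith [sq_nonneg ε]
  -- main identity and conclusion
  have hid := main_identity (lam := lam) (f := f) hpsm hqsm hp0 hq0 hp1 hq1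
  have hQlt : (∫ r in (0:ℝ)..1, ((deriv (deriv p) r + deriv p r / r)
      - (deriv (deriv q) r + deriv q r / r)) ^ 2 * r) < ε ^ 2 := by
    rw [hid]
    have h1 := abs_le.mp habsP
    have h2 := abs_le.mp habsQ
    have h3 := abs_le.mp hcub
    have hε2 : 0 < ε ^ 2 := pow_pos hε 2
    have : ε ^ 2 / 8 + ε ^ 2 / 8 + (1/2) * (ε ^ 2 / 2) < ε ^ 2 := by linarith
    nlinarith [h1.1, h1.2, h2.1, h2.2, h3.1, h3.2]
  exact (Real.sqrt_lt' hε).mpr hQlt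
end
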